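/- For Hermitian J, the free partition function Z_free[J] = ∫ DΦ exp(−V tr(EΦ² + ½MΦMΦ) + V tr(JΦ)) equals C′ · exp((V/2) ∑_{m,n=1}^{N} J_{mn} J_{nm} / (E_{n−1} + E_{m−1} + √(E_{n−1} E_{m−1}))), where C′ = (∏_{n=1}^{N} √(2π/(3V E_{n−1}))) · (∏_{1≤n<m≤N} π/(V(E_{n−1} + E_{m−1} + √(E_{n−1} E_{m−1})))). -/

import Mathlib

open MeasureTheory Matrix Polynomial BigOperators

/-- Index set for the strictly-upper-triangular entries. -/
abbrev OffIdx (N : ℕ) := {p : Fin N × Fin N // p.1 < p.2}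

/-- Real coordinates of a Hermitian matrix: the diagonal entries and the
(complex) strictly-upper-triangular entries. -/
abbrev HCoords (N : ℕ) := (Fin N → ℝ) × (OffIdx N → ℂ)

/-- The Hermitian matrix with the given coordinates. -/
noncomputable def hermOf {N : ℕ} (c : HCoords N) : Matrix (Fin N) (Fin N) ℂ :=
  Matrix.of fun i j =>
    if h : i < j then c.2 ⟨(i, j), h⟩
    else if h' : j < i then star (c.2 ⟨(j, i), h'⟩)
    else (c.1 i : ℂ)

/-- The diagonal matrix `M = diag (√E_0, …, √E_{N-1})`. -/
noncomputable def Mmat (N : ℕ) (Ev : Fin N → ℝ) : Matrix (Fin N) (Fin N) ℂ :=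
  Matrix.diagonal fun i => (Real.sqrt (Ev i) : ℂ)

/-- The diagonal matrix `E = diag (E_0, …, E_{N-1})`. -/
noncomputable def Emat (N : ℕ) (Ev : Fin N → ℝ) : Matrix (Fin N) (Fin N) ℂ :=
  Matrix.diagonal fun i => (Ev i : ℂ)

/-- The action `S[Φ] = V tr (EΦ² + κΦ + ½MΦMΦ + √λ MΦ³ + (λ/4)Φ⁴)`. -/
noncomputable def action (N : ℕ) (Vc lam kap : ℝ) (Ev : Fin N → ℝ)
    (Φ : Matrix (Fin N) (Fin N) ℂ) : ℝ :=
  Vc * (Matrix.trace (Emat N Ev * Φ ^ 2 + (kap : ℂ) • Φ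
      + (1 / 2 : ℂ) • (Mmat N Ev * Φ * Mmat N Ev * Φ)
      + ((Real.sqrt lam : ℝ) : ℂ) • (Mmat N Ev * Φ ^ 3)
      + ((lam : ℂ) / 4) • Φ ^ 4)).re

/-- The partition function `Z[J] = ∫ DΦ exp (−S[Φ] + V tr (JΦ))`. -/
noncomputable def Zfun (N : ℕ) (Vc lam kap : ℝ) (Ev : Fin N → ℝ)
    (J : Matrix (Fin N) (Fin N) ℂ) : ℝ :=
  ∫ c : HCoords N,
    Real.exp (- action N Vc lam kap Ev (hermOf c)
      + Vc * (Matrix.trace (J * hermOf c)).re)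

/-- `P(z) = ∫ℝ exp(−(λV/4)x⁴ + Vxz) dx`. -/
noncomputable def Pint (Vc lam : ℝ) (z : ℝ) : ℝ :=
  ∫ x : ℝ, Real.exp (- (lam * Vc / 4) * x ^ 4 + Vc * x * z)

/-- `P_N(s₁,…,s_N) = det (P^{(i−1)}(s_j))`. -/
noncomputable def PNdet (N : ℕ) (Vc lam : ℝ) (s : Fin N → ℝ) : ℝ :=
  Matrix.det (Matrix.of fun i j : Fin N => iteratedDeriv (i : ℕ) (Pint Vc lam) (s j))

/-- The free action `S_free[Φ] = V tr (EΦ² + ½MΦMΦ)`. -/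
noncomputable def freeAction (N : ℕ) (Vc : ℝ) (Ev : Fin N → ℝ)
    (Φ : Matrix (Fin N) (Fin N) ℂ) : ℝ :=
  Vc * (Matrix.trace (Emat N Ev * Φ ^ 2
      + (1 / 2 : ℂ) • (Mmat N Ev * Φ * Mmat N Ev * Φ))).re


namespace FPFaux

open Complex

lemma gauss1 {a : ℝ} (ha : 0 < a) (b : ℝ) :
    ∫ x : ℝ, Real.exp (-a * x^2 + b * x)
      = Real.sqrt (Real.pi / a) * Real.exp (b^2/(4*a)) := by
  have hb : ((-a : ℂ)).re < 0 := by simpa using ha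
  have h := integral_cexp_quadratic hb (b : ℂ) 0
  have h1 : ∫ x : ℝ, cexp ((-a:ℂ) * x ^ 2 + (b:ℂ) * x + 0)
      = ((∫ x : ℝ, Real.exp (-a * x^2 + b * x) : ℝ) : ℂ) := by
    calc ∫ x : ℝ, cexp ((-a:ℂ) * x ^ 2 + (b:ℂ) * x + 0)
        = ∫ x : ℝ, ((Real.exp (-a * x^2 + b * x) : ℝ) : ℂ) := by
          refine integral_congr_ae (Filter.Eventually.of_forall fun x => ?_)
          simp only [Complex.ofReal_exp]
          norm_num
      _ = ((∫ x : ℝ, Real.exp (-a * x^2 + b * x) : ℝ) : ℂ) := integral_ofReal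
  have h2 : ((Real.pi / a : ℝ) : ℂ) ^ (1/2 : ℂ) = ((Real.sqrt (Real.pi / a) : ℝ) : ℂ) := by
    rw [show (1/2:ℂ) = ((1/2:ℝ):ℂ) by norm_num, ← Complex.ofReal_cpow (by positivity)]
    norm_num [Real.sqrt_eq_rpow]
  have h3 : ((0 : ℂ) - (b:ℂ)^2 / (4 * (-a:ℂ))) = ((b^2/(4*a) : ℝ) : ℂ) := by
    push_cast; field_simp; ring
  rw [h1, show (↑Real.pi / -(-a:ℂ)) = ((Real.pi / a : ℝ) : ℂ) by push_cast; ring_nf, h2, h3,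
    ← Complex.ofReal_exp, ← Complex.ofReal_mul] at h
  exact_mod_cast h

lemma gauss2 {a : ℝ} (ha : 0 < a) (w : ℂ) :
    ∫ z : ℂ, Real.exp (-a * Complex.normSq z + (w * z).re)
      = Real.pi / a * Real.exp (Complex.normSq w / (4*a)) := by
  have h0 : ∫ z : ℂ, Real.exp (-a * Complex.normSq z + (w * z).re)
      = ∫ p : ℝ × ℝ, Real.exp (-a * p.1^2 + w.re * p.1)
          * Real.exp (-a * p.2^2 + (-w.im) * p.2) := by
    rw [← (Complex.volume_preserving_equiv_real_prod.symm).integral_comp'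
      (fun z => Real.exp (-a * Complex.normSq z + (w * z).re))]
    refine integral_congr_ae (Filter.Eventually.of_forall fun p => ?_)
    show Real.exp (-a * Complex.normSq (Complex.measurableEquivRealProd.symm p)
        + (w * Complex.measurableEquivRealProd.symm p).re) = _
    have hp : (Complex.measurableEquivRealProd.symm p) = Complex.mk p.1 p.2 := rfl
    rw [hp]
    show _ = Real.exp (-a * p.1^2 + w.re * p.1) * Real.exp (-a * p.2^2 + (-w.im) * p.2)
    rw [← Real.exp_add]
    congr 1
    simp only [Complex.normSq_mk, Complex.mul_re]
    ring
  rw [h0, Measure.volume_eq_prod _ _, integral_prod_mul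
    (f := fun x => Real.exp (-a*x^2 + w.re*x)) (g := fun y => Real.exp (-a*y^2 + (-w.im)*y)),
    gauss1 ha, gauss1 ha]
  have h1 : Real.sqrt (Real.pi / a) * Real.sqrt (Real.pi / a) = Real.pi / a :=
    Real.mul_self_sqrt (by positivity)
  have h2 : Complex.normSq w = w.re^2 + w.im^2 := by
    simp [Complex.normSq_apply]; ring
  calc √(Real.pi / a) * Real.exp (w.re ^ 2 / (4 * a))
        * (√(Real.pi / a) * Real.exp ((-w.im) ^ 2 / (4 * a)))
      = (√(Real.pi / a) * √(Real.pi / a))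
        * (Real.exp (w.re ^ 2 / (4 * a)) * Real.exp ((-w.im) ^ 2 / (4 * a))) := by ring
    _ = Real.pi / a * Real.exp (Complex.normSq w / (4*a)) := by
        rw [h1, ← Real.exp_add, h2]
        congr 1
        ring

lemma sum_offIdx {N : ℕ} {M : Type*} [AddCommMonoid M] (F : OffIdx N → M) :
    ∑ p : OffIdx N, F p
      = ∑ i : Fin N, ∑ j ∈ Finset.Ioi i,
          if h : i < j then F ⟨(i, j), h⟩ else 0 := by
  rw [Finset.sum_sigma']
  refine Finset.sum_bij' (fun p _ => ⟨p.1.1, p.1.2⟩)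
    (fun x hx => ⟨(x.1, x.2), by
      simp only [Finset.mem_sigma, Finset.mem_univ, true_and, Finset.mem_Ioi] at hx
      exact hx⟩) ?_ ?_ ?_ ?_ ?_
  · intro p hp
    simp only [Finset.mem_sigma, Finset.mem_univ, true_and, Finset.mem_Ioi]
    exact p.2
  · intro x hx; exact Finset.mem_univ _
  · intro p hp; rfl
  · intro x hx; rfl
  · intro p hp
    rw [dif_pos p.2]

lemma prod_offIdx {N : ℕ} {M : Type*} [CommMonoid M] (F : OffIdx N → M) :
    ∏ p : OffIdx N, F p
      = ∏ i : Fin N, ∏ j ∈ Finset.Ioi i,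
          if h : i < j then F ⟨(i, j), h⟩ else 1 := by
  rw [Finset.prod_sigma']
  refine Finset.prod_bij' (fun p _ => ⟨p.1.1, p.1.2⟩)
    (fun x hx => ⟨(x.1, x.2), by
      simp only [Finset.mem_sigma, Finset.mem_univ, true_and, Finset.mem_Ioi] at hx
      exact hx⟩) ?_ ?_ ?_ ?_ ?_
  · intro p hp
    simp only [Finset.mem_sigma, Finset.mem_univ, true_and, Finset.mem_Ioi]
    exact p.2
  · intro x hx; exact Finset.mem_univ _
  · intro p hp; rfl
  · intro x hx; rfl
  · intro p hp
    rw [dif_pos p.2]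

lemma sum_split {N : ℕ} {M : Type*} [AddCommMonoid M] (f : Fin N → Fin N → M) :
    ∑ i : Fin N, ∑ j : Fin N, f i j
      = (∑ i : Fin N, f i i)
        + ∑ i : Fin N, ∑ j ∈ Finset.Ioi i, (f i j + f j i) := by
  have h1 : ∀ i : Fin N, ∑ j : Fin N, f i j
      = f i i + (∑ j ∈ Finset.Ioi i, f i j + ∑ j ∈ Finset.Iio i, f i j) := by
    intro i
    have hu : (Finset.univ : Finset (Fin N)) = insert i (Finset.Ioi i ∪ Finset.Iio i) := by
      ext j
      simp only [Finset.mem_univ, Finset.mem_insert, Finset.mem_union, Finset.mem_Ioi,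
        Finset.mem_Iio, true_iff]
      rcases lt_trichotomy i j with h | h | h <;> tauto
    rw [hu, Finset.sum_insert (by simp), Finset.sum_union (Finset.disjoint_Ioi_Iio i)]
  have h2 : ∑ i : Fin N, ∑ j ∈ Finset.Iio i, f i j
      = ∑ i : Fin N, ∑ j ∈ Finset.Ioi i, f j i := by
    rw [Finset.sum_sigma', Finset.sum_sigma']
    refine Finset.sum_nbij' (fun x => ⟨x.2, x.1⟩) (fun x => ⟨x.2, x.1⟩) ?_ ?_ ?_ ?_ ?_ <;>
      simp [Finset.mem_sigma, Finset.mem_Iio, Finset.mem_Ioi]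
  simp_rw [h1]
  rw [Finset.sum_add_distrib, Finset.sum_add_distrib, h2]
  congr 1
  rw [← Finset.sum_add_distrib]
  exact Finset.sum_congr rfl fun i _ => (Finset.sum_add_distrib).symm

section
variable {N : ℕ} (Vc : ℝ) (Ev : Fin N → ℝ) (J : Matrix (Fin N) (Fin N) ℂ)

lemma hermOf_lt {c : HCoords N} {i j : Fin N} (h : i < j) :
    hermOf c i j = c.2 ⟨(i, j), h⟩ := by simp [hermOf, h]

lemma hermOf_gt {c : HCoords N} {i j : Fin N} (h : j < i) :
    hermOf c i j = (starRingEnd ℂ) (c.2 ⟨(j, i), h⟩) := by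
  simp [hermOf, h, not_lt_of_gt h, asymm h]

lemma hermOf_diag {c : HCoords N} (i : Fin N) :
    hermOf c i i = (c.1 i : ℂ) := by simp [hermOf]

lemma hermOf_conj (c : HCoords N) (i j : Fin N) :
    hermOf c j i = (starRingEnd ℂ) (hermOf c i j) := by
  rcases lt_trichotomy i j with h | h | h
  · rw [hermOf_lt h, hermOf_gt h]
  · subst h; rw [hermOf_diag, Complex.conj_ofReal]
  · rw [hermOf_gt h, hermOf_lt h, Complex.conj_conj]

lemma exponent_eq (hE : ∀ i, 0 ≤ Ev i) (hJ : J.IsHermitian) (c : HCoords N) :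
    - freeAction N Vc Ev (hermOf c) + Vc * (Matrix.trace (J * hermOf c)).re
      = (∑ i : Fin N, (-(3*Vc*Ev i/2) * (c.1 i)^2 + Vc*(J i i).re * c.1 i))
        + ∑ p : OffIdx N,
            (-(Vc * (Ev p.1.1 + Ev p.1.2 + Real.sqrt (Ev p.1.1 * Ev p.1.2)))
                * Complex.normSq (c.2 p)
              + 2*Vc*(J p.1.2 p.1.1 * c.2 p).re) := by
  have hmul : ∀ i j, hermOf c i j * hermOf c j i
      = (Complex.normSq (hermOf c i j) : ℂ) := by
    intro i j
    rw [hermOf_conj c i j, Complex.mul_conj]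
  have t1 : Matrix.trace (Emat N Ev * (hermOf c) ^ 2)
      = ∑ i : Fin N, ∑ j : Fin N, ((Ev i * Complex.normSq (hermOf c i j) : ℝ) : ℂ) := by
    rw [sq]
    have e : ∀ i, (Emat N Ev * (hermOf c * hermOf c)) i i
        = (Ev i : ℂ) * ∑ j, hermOf c i j * hermOf c j i := by
      intro i
      rw [Emat, Matrix.diagonal_mul, Matrix.mul_apply]
    simp only [Matrix.trace, Matrix.diag, e]
    refine Finset.sum_congr rfl fun i _ => ?_
    rw [Finset.mul_sum]
    refine Finset.sum_congr rfl fun j _ => ?_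
    rw [hmul]
    push_cast
    ring
  have t2 : Matrix.trace (Mmat N Ev * hermOf c * Mmat N Ev * hermOf c)
      = ∑ i : Fin N, ∑ j : Fin N,
          ((Real.sqrt (Ev i) * Real.sqrt (Ev j) * Complex.normSq (hermOf c i j) : ℝ) : ℂ) := by
    have hassoc : Mmat N Ev * hermOf c * Mmat N Ev * hermOf c
        = (Mmat N Ev * hermOf c) * (Mmat N Ev * hermOf c) := by
      rw [Matrix.mul_assoc]
    have hAA : ∀ (A : Matrix (Fin N) (Fin N) ℂ),
        Matrix.trace (A * A) = ∑ i : Fin N, ∑ j : Fin N, A i j * A j i := by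
      intro A
      simp [Matrix.trace, Matrix.diag, Matrix.mul_apply]
    have e : ∀ i j, (Mmat N Ev * hermOf c) i j
        = (Real.sqrt (Ev i) : ℂ) * hermOf c i j := by
      intro i j
      rw [Mmat, Matrix.diagonal_mul]
    rw [hassoc, hAA]
    refine Finset.sum_congr rfl fun i _ => ?_
    refine Finset.sum_congr rfl fun j _ => ?_
    rw [e, e]
    have : (Real.sqrt (Ev i) : ℂ) * hermOf c i j * ((Real.sqrt (Ev j) : ℂ) * hermOf c j i)
        = ((Real.sqrt (Ev i) : ℂ) * (Real.sqrt (Ev j) : ℂ)) * (hermOf c i j * hermOf c j i) := by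
      ring
    rw [this, hmul]
    push_cast
    ring
  have t3 : (Matrix.trace (J * hermOf c)).re
      = ∑ i : Fin N, ∑ j : Fin N, (J i j * (starRingEnd ℂ) (hermOf c i j)).re := by
    simp only [Matrix.trace, Matrix.diag, Matrix.mul_apply, Complex.re_sum]
    refine Finset.sum_congr rfl fun i _ => ?_
    refine Finset.sum_congr rfl fun j _ => ?_
    rw [hermOf_conj]
  have key : - freeAction N Vc Ev (hermOf c) + Vc * (Matrix.trace (J * hermOf c)).re
      = ∑ i : Fin N, ∑ j : Fin N,
          (-(Vc * (Ev i + Real.sqrt (Ev i) * Real.sqrt (Ev j) / 2))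
              * Complex.normSq (hermOf c i j)
            + Vc * (J i j * (starRingEnd ℂ) (hermOf c i j)).re) := by
    rw [freeAction, Matrix.trace_add, Matrix.trace_smul, t1, t2, t3]
    simp only [← Complex.ofReal_sum, smul_eq_mul]
    have hre : ∀ (x y : ℝ), ((x : ℂ) + 1/2 * (y : ℂ)).re = x + y/2 := by
      intro x y
      simp [Complex.add_re, Complex.mul_re]
      ring
    rw [hre]
    have expand : ∑ i : Fin N, ∑ j : Fin N,
          (-(Vc * (Ev i + Real.sqrt (Ev i) * Real.sqrt (Ev j) / 2))
              * Complex.normSq (hermOf c i j)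
            + Vc * (J i j * (starRingEnd ℂ) (hermOf c i j)).re)
        = ∑ i : Fin N, ∑ j : Fin N,
          (Vc * (J i j * (starRingEnd ℂ) (hermOf c i j)).re
            - Vc * (Ev i * Complex.normSq (hermOf c i j))
            - Vc/2 * (Real.sqrt (Ev i) * Real.sqrt (Ev j) * Complex.normSq (hermOf c i j))) := by
      refine Finset.sum_congr rfl fun i _ => Finset.sum_congr rfl fun j _ => ?_
      ring
    rw [expand]
    simp only [Finset.sum_sub_distrib, ← Finset.mul_sum]
    ring
  rw [key, sum_split]
  congr 1
  · refine Finset.sum_congr rfl fun i _ => ?_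
    rw [hermOf_diag, Complex.normSq_ofReal, Complex.conj_ofReal,
      Real.mul_self_sqrt (hE i)]
    have : (J i i * (c.1 i : ℂ)).re = (J i i).re * c.1 i := by
      simp [Complex.mul_re]
    rw [this]
    ring
  · rw [sum_offIdx (fun p : OffIdx N =>
      (-(Vc * (Ev p.1.1 + Ev p.1.2 + Real.sqrt (Ev p.1.1 * Ev p.1.2)))
          * Complex.normSq (c.2 p)
        + 2*Vc*(J p.1.2 p.1.1 * c.2 p).re))]
    refine Finset.sum_congr rfl fun i _ => ?_
    refine Finset.sum_congr rfl fun j hj => ?_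
    have hij : i < j := Finset.mem_Ioi.mp hj
    rw [dif_pos hij]
    show -(Vc * (Ev i + Real.sqrt (Ev i) * Real.sqrt (Ev j) / 2))
            * Complex.normSq (hermOf c i j)
          + Vc * (J i j * (starRingEnd ℂ) (hermOf c i j)).re
        + (-(Vc * (Ev j + Real.sqrt (Ev j) * Real.sqrt (Ev i) / 2))
            * Complex.normSq (hermOf c j i)
          + Vc * (J j i * (starRingEnd ℂ) (hermOf c j i)).re)
      = -(Vc * (Ev i + Ev j + Real.sqrt (Ev i * Ev j)))
            * Complex.normSq (c.2 ⟨(i, j), hij⟩)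
          + 2*Vc*(J j i * c.2 ⟨(i, j), hij⟩).re
    rw [hermOf_lt hij, hermOf_gt hij]
    have e1 : Complex.normSq ((starRingEnd ℂ) (c.2 ⟨(i, j), hij⟩))
        = Complex.normSq (c.2 ⟨(i, j), hij⟩) := Complex.normSq_conj _
    have e2 : (J i j * (starRingEnd ℂ) (c.2 ⟨(i, j), hij⟩)).re
        = (J j i * c.2 ⟨(i, j), hij⟩).re := by
      have h' : J i j = (starRingEnd ℂ) (J j i) := (hJ.apply i j).symm
      rw [h', ← _root_.map_mul (starRingEnd ℂ), Complex.conj_re]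
    have e3 : (J j i * (starRingEnd ℂ) ((starRingEnd ℂ) (c.2 ⟨(i, j), hij⟩))).re
        = (J j i * c.2 ⟨(i, j), hij⟩).re := by
      rw [Complex.conj_conj]
    rw [e1, e2, e3, Real.sqrt_mul (hE i)]
    ring
end

end FPFaux

/-- The free partition function
`Z_free[J] = ∫ DΦ exp(−V tr(EΦ² + ½MΦMΦ) + V tr(JΦ))` equals
`C′ · exp((V/2) ∑_{m,n} J_{mn}J_{nm}/(E_{n−1}+E_{m−1}+√(E_{n−1}E_{m−1})))`. -/
theorem free_partition_function
    (N : ℕ) (hN : 1 ≤ N) (Vc : ℝ) (hV : 0 < Vc)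
    (Ev : Fin N → ℝ) (hE : ∀ i, 0 < Ev i)
    (J : Matrix (Fin N) (Fin N) ℂ) (hJ : J.IsHermitian) :
    (∫ c : HCoords N,
        Real.exp (- freeAction N Vc Ev (hermOf c)
          + Vc * (Matrix.trace (J * hermOf c)).re))
      = ((∏ n : Fin N, Real.sqrt (2 * Real.pi / (3 * Vc * Ev n)))
          * ∏ n : Fin N, ∏ m ∈ Finset.Ioi n,
              Real.pi / (Vc * (Ev n + Ev m + Real.sqrt (Ev n * Ev m))))
        * Real.exp ((Vc / 2) * ∑ m : Fin N, ∑ n : Fin N,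
            (J m n * J n m).re / (Ev n + Ev m + Real.sqrt (Ev n * Ev m))) := by
  classical
  have hEle : ∀ i, 0 ≤ Ev i := fun i => (hE i).le
  set D : Fin N → Fin N → ℝ :=
    fun i j => Ev i + Ev j + Real.sqrt (Ev i * Ev j) with hDdef
  have hDpos : ∀ i j, 0 < D i j := by
    intro i j
    have h1 := Real.sqrt_nonneg (Ev i * Ev j)
    have h2 := hE i
    have h3 := hE j
    simp only [hDdef]
    linarith
  -- Step 1: factor the integrand
  have hint : ∀ c : HCoords N,
      Real.exp (- freeAction N Vc Ev (hermOf c)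
        + Vc * (Matrix.trace (J * hermOf c)).re)
      = (∏ i : Fin N,
          Real.exp (-(3*Vc*Ev i/2) * (c.1 i)^2 + Vc*(J i i).re * c.1 i))
        * ∏ p : OffIdx N,
          Real.exp (-(Vc * D p.1.1 p.1.2) * Complex.normSq (c.2 p)
            + (((2*Vc : ℝ) : ℂ) * J p.1.2 p.1.1 * c.2 p).re) := by
    intro c
    rw [FPFaux.exponent_eq Vc Ev J hEle hJ c, Real.exp_add, Real.exp_sum, Real.exp_sum]
    congr 1
    refine Finset.prod_congr rfl fun p _ => ?_
    have h2v : (((2*Vc : ℝ) : ℂ) * J p.1.2 p.1.1 * c.2 p).re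
        = 2 * Vc * (J p.1.2 p.1.1 * c.2 p).re := by
      rw [mul_assoc, Complex.re_ofReal_mul]
    rw [h2v]
  simp_rw [hint]
  -- Step 2: Fubini
  rw [Measure.volume_eq_prod, MeasureTheory.integral_prod_mul
    (f := fun x : Fin N → ℝ => ∏ i : Fin N,
      Real.exp (-(3*Vc*Ev i/2) * (x i)^2 + Vc*(J i i).re * x i))
    (g := fun y : OffIdx N → ℂ => ∏ p : OffIdx N,
      Real.exp (-(Vc * D p.1.1 p.1.2) * Complex.normSq (y p)
        + (((2*Vc : ℝ) : ℂ) * J p.1.2 p.1.1 * y p).re)),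
    MeasureTheory.integral_fintype_prod_volume_eq_prod (ι := Fin N)
      (f := fun i x => Real.exp (-(3*Vc*Ev i/2) * x^2 + Vc*(J i i).re * x)),
    MeasureTheory.integral_fintype_prod_volume_eq_prod (ι := OffIdx N)
      (f := fun p z => Real.exp (-(Vc * D p.1.1 p.1.2) * Complex.normSq z
        + (((2*Vc : ℝ) : ℂ) * J p.1.2 p.1.1 * z).re))]
  -- Step 3: evaluate the Gaussian integrals
  have hdiag : ∀ i : Fin N,
      (∫ x : ℝ, Real.exp (-(3*Vc*Ev i/2) * x^2 + Vc*(J i i).re * x))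
      = Real.sqrt (2 * Real.pi / (3 * Vc * Ev i))
        * Real.exp (Vc * (J i i).re^2 / (6 * Ev i)) := by
    intro i
    have ha : (0:ℝ) < 3*Vc*Ev i/2 := by
      have := hE i; positivity
    rw [FPFaux.gauss1 ha]
    have hv := (hE i).ne'
    congr 1
    · congr 1
      field_simp
    · congr 1
      field_simp
      ring
  have hoff : ∀ p : OffIdx N,
      (∫ z : ℂ, Real.exp (-(Vc * D p.1.1 p.1.2) * Complex.normSq z
        + (((2*Vc : ℝ) : ℂ) * J p.1.2 p.1.1 * z).re))
      = Real.pi / (Vc * D p.1.1 p.1.2)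
        * Real.exp (Vc * Complex.normSq (J p.1.2 p.1.1) / D p.1.1 p.1.2) := by
    intro p
    have ha : (0:ℝ) < Vc * D p.1.1 p.1.2 := mul_pos hV (hDpos _ _)
    rw [FPFaux.gauss2 ha (((2*Vc : ℝ) : ℂ) * J p.1.2 p.1.1)]
    congr 1
    rw [Complex.normSq_mul, Complex.normSq_ofReal]
    have hD := (hDpos p.1.1 p.1.2).ne'
    field_simp
    ring
  simp_rw [hdiag, hoff]
  -- Step 4: rewrite the off-diagonal product over pairs
  rw [FPFaux.prod_offIdx (fun p : OffIdx N =>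
    Real.pi / (Vc * D p.1.1 p.1.2)
      * Real.exp (Vc * Complex.normSq (J p.1.2 p.1.1) / D p.1.1 p.1.2))]
  -- Step 5: compute the RHS exponent
  have hsum : (Vc / 2) * ∑ m : Fin N, ∑ n : Fin N,
        (J m n * J n m).re / (Ev n + Ev m + Real.sqrt (Ev n * Ev m))
      = (∑ i : Fin N, Vc * (J i i).re^2 / (6 * Ev i))
        + ∑ i : Fin N, ∑ j ∈ Finset.Ioi i,
            Vc * Complex.normSq (J j i) / D i j := by
    rw [FPFaux.sum_split (f := fun m n =>
      (J m n * J n m).re / (Ev n + Ev m + Real.sqrt (Ev n * Ev m))), mul_add]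
    congr 1
    · rw [Finset.mul_sum]
      refine Finset.sum_congr rfl fun i _ => ?_
      have him : (J i i).im = 0 := by
        have h' : (starRingEnd ℂ) (J i i) = J i i := hJ.apply i i
        exact Complex.conj_eq_iff_im.mp h'
      have hre : (J i i * J i i).re = (J i i).re^2 := by
        rw [Complex.mul_re, him]
        ring
      rw [Real.sqrt_mul_self (hEle i), hre]
      have hne := (hE i).ne'
      field_simp
      ring
    · rw [Finset.mul_sum]
      refine Finset.sum_congr rfl fun i _ => ?_
      rw [Finset.mul_sum]
      refine Finset.sum_congr rfl fun j hj => ?_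
      have hconj : J i j = (starRingEnd ℂ) (J j i) := (hJ.apply i j).symm
      have h1 : (J i j * J j i).re = Complex.normSq (J j i) := by
        rw [hconj, mul_comm, Complex.mul_conj, Complex.ofReal_re]
      have h2 : (J j i * J i j).re = Complex.normSq (J j i) := by
        rw [hconj, Complex.mul_conj, Complex.ofReal_re]
      have hcm : Real.sqrt (Ev j * Ev i) = Real.sqrt (Ev i * Ev j) := by
        rw [mul_comm]
      rw [h1, h2, hcm]
      have hD := (hDpos i j).ne'
      simp only [hDdef] at hD ⊢
      have : Ev j + Ev i + Real.sqrt (Ev i * Ev j)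
          = Ev i + Ev j + Real.sqrt (Ev i * Ev j) := by ring
      rw [this]
      field_simp
      ring
  rw [hsum, Real.exp_add, Real.exp_sum]
  have hexp2 : Real.exp (∑ i : Fin N, ∑ j ∈ Finset.Ioi i,
        Vc * Complex.normSq (J j i) / D i j)
      = ∏ i : Fin N, ∏ j ∈ Finset.Ioi i,
          Real.exp (Vc * Complex.normSq (J j i) / D i j) := by
    rw [Real.exp_sum]
    exact Finset.prod_congr rfl fun i _ => Real.exp_sum _ _
  rw [hexp2]
  -- Step 6: final algebraic rearrangement
  rw [Finset.prod_mul_distrib]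
  have hoffprod : ∏ i : Fin N, ∏ j ∈ Finset.Ioi i,
        (if h : i < j then
          Real.pi / (Vc * D i j)
            * Real.exp (Vc * Complex.normSq (J j i) / D i j)
          else 1)
      = (∏ i : Fin N, ∏ j ∈ Finset.Ioi i, Real.pi / (Vc * D i j))
        * ∏ i : Fin N, ∏ j ∈ Finset.Ioi i,
            Real.exp (Vc * Complex.normSq (J j i) / D i j) := by
    rw [← Finset.prod_mul_distrib]
    refine Finset.prod_congr rfl fun i _ => ?_
    rw [← Finset.prod_mul_distrib]
    refine Finset.prod_congr rfl fun j hj => ?_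
    rw [dif_pos (Finset.mem_Ioi.mp hj)]
  rw [hoffprod]
  simp only [hDdef]
  ring
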